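/- Let n ≥ 2 and c ∈ [−1/(n−1), 0). For every n×n real positive semidefinite matrix A, the matrix f_*[A] which equals A on the diagonal and c·a_{ij} off the diagonal is positive semidefinite. -/

import Mathlib

open Finset Matrix

theorem fstar_neg_c_posSemidef (n : ℕ) (hn : 2 ≤ n) (c : ℝ)
    (hc : c ∈ Set.Ico (-1 / (n - 1) : ℝ) 0)
    (A : Matrix (Fin n) (Fin n) ℝ) (hA : A.PosSemidef) :
    (Matrix.of fun i j => if i = j then A i j else c * A i j).PosSemidef := by
  obtain ⟨hc1, hc2⟩ := hc
  have hsym : ∀ i j, A j i = A i j := fun i j => by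
    conv_lhs => rw [← hA.1]
    simp [Matrix.conjTranspose_apply]
  refine Matrix.posSemidef_iff_dotProduct_mulVec.mpr ⟨?_, ?_⟩
  · ext i j
    by_cases h : i = j <;> simp [Matrix.conjTranspose_apply, h, hsym, eq_comm]
  · intro x
    have hn1 : (1:ℝ) ≤ (n:ℝ) - 1 := by
      have : (2:ℝ) ≤ (n:ℝ) := by exact_mod_cast hn
      linarith
    set S : ℝ := ∑ i, A i i * x i ^ 2 with hS
    set Q : ℝ := ∑ i, ∑ j, x i * (A i j * x j) with hQdef
    set y : Fin n → Fin n → Fin n → ℝ :=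
      fun i j k => (if k = i then x i else 0) - (if k = j then x j else 0) with hy
    have hq : ∀ i j : Fin n, y i j ⬝ᵥ A *ᵥ y i j
        = A i i * x i ^ 2 + A j j * x j ^ 2 - 2 * (A i j * (x i * x j)) := by
      intro i j
      simp only [hy, dotProduct, Matrix.mulVec, mul_sub, sub_mul, mul_ite, ite_mul,
        mul_zero, zero_mul, Finset.sum_sub_distrib, Finset.sum_ite_eq', Finset.mem_univ,
        if_true]
      rw [hsym j i]
      ring
    set T : ℝ := ∑ i, ∑ j, y i j ⬝ᵥ A *ᵥ y i j with hT
    have e1 : ∑ _i : Fin n, ∑ _j : Fin n, A _i _i * x _i ^ 2 = n * S := by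
      simp [Finset.sum_const, Finset.card_univ, hS, Finset.mul_sum, mul_comm]
    have e2 : ∑ _i : Fin n, ∑ _j : Fin n, A _j _j * x _j ^ 2 = n * S := by
      rw [Finset.sum_comm]; exact e1
    have e3 : ∑ i : Fin n, ∑ j : Fin n, 2 * (A i j * (x i * x j)) = 2 * Q := by
      rw [hQdef, Finset.mul_sum]
      refine Finset.sum_congr rfl fun i _ => ?_
      rw [Finset.mul_sum]
      exact Finset.sum_congr rfl fun j _ => by ring
    have hTQ : T = n * S + n * S - 2 * Q := by
      rw [hT]
      simp only [hq, Finset.sum_sub_distrib, Finset.sum_add_distrib]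
      rw [e1, e2, e3]
    have hT0 : 0 ≤ T := by
      rw [hT]
      refine Finset.sum_nonneg fun i _ => Finset.sum_nonneg fun j _ => ?_
      have := hA.dotProduct_mulVec_nonneg (y i j)
      simpa using this
    have hS0 : 0 ≤ S := by
      refine Finset.sum_nonneg fun i _ => mul_nonneg ?_ (sq_nonneg _)
      have := hA.dotProduct_mulVec_nonneg (Pi.single i 1)
      simpa [dotProduct, Matrix.mulVec, Pi.single_apply] using this
    have hX : star x ⬝ᵥ (Matrix.of fun i j => if i = j then A i j else c * A i j) *ᵥ x
        = (1 - c) * S + c * Q := by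
      have split : ∀ (f g : Fin n → ℝ) (i : Fin n),
          ∑ j, (if i = j then f j else g j) = f i - g i + ∑ j, g j := by
        intro f g i
        have h : ∀ j, (if i = j then f j else g j)
            = (if i = j then f j - g j else 0) + g j := by
          intro j; split <;> ring
        simp [h, Finset.sum_add_distrib, Finset.sum_ite_eq]
      simp only [dotProduct, Matrix.mulVec, Matrix.of_apply, star_trivial,
        Pi.star_apply, ite_mul, mul_ite, Finset.mul_sum]
      have step : ∀ i : Fin n,
          (∑ j, if i = j then x i * (A i j * x j) else x i * (c * A i j * x j))
          = (1 - c) * (A i i * x i ^ 2) + c * ∑ j, x i * (A i j * x j) := by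
        intro i
        rw [split (fun j => x i * (A i j * x j)) (fun j => x i * (c * A i j * x j)) i,
          Finset.mul_sum]
        have h2 : ∑ j, x i * (c * A i j * x j) = ∑ j, c * (x i * (A i j * x j)) :=
          Finset.sum_congr rfl fun j _ => by ring
        rw [h2]
        ring
      rw [Finset.sum_congr rfl fun i _ => step i, Finset.sum_add_distrib,
        ← Finset.mul_sum, ← Finset.mul_sum, hS, hQdef]
    have hcoef : 0 ≤ 1 + c * ((n:ℝ) - 1) := by
      have h := (div_le_iff₀ (by linarith : (0:ℝ) < (n:ℝ) - 1)).mp hc1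
      nlinarith
    have hQT : Q = n * S - T / 2 := by linarith
    rw [hX, hQT]
    have h1 : 0 ≤ (1 + c * ((n:ℝ) - 1)) * S := mul_nonneg hcoef hS0
    have h2 : 0 ≤ (-c / 2) * T := mul_nonneg (by linarith) hT0
    nlinarith
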